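/- Suppose t₁, t₂, t₃, t₄ are real numbers with −1 ≤ t₁ ≤ t₂ ≤ t₃ ≤ t₄ ≤ 1/2 and α₁, α₂, α₃, α₄ are nonnegative reals satisfying α₁t₁^k + α₂t₂^k + α₃t₃^k + α₄t₄^k = β_k for k = 0,…,7, where β₀ = 239, β₁ = β₃ = β₅ = β₇ = −1, β₂ = 29, β₄ = 8, β₆ = 11/4. Then (t₁,t₂,t₃,t₄) = (−1, −1/2, 0, 1/2) and (α₁,α₂,α₃,α₄) = (1, 56, 126, 56). -/

import Mathlib

lemma root_cases (t : ℝ) (h : (1 + t) * (1 / 2 - t) * ((t + 1 / 2) * t) ^ 2 = 0) :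
    t = -1 ∨ t = -1 / 2 ∨ t = 0 ∨ t = 1 / 2 := by
  rcases mul_eq_zero.mp h with h | h
  · rcases mul_eq_zero.mp h with h | h
    · exact Or.inl (by linarith)
    · exact Or.inr (Or.inr (Or.inr (by linarith)))
  · rcases mul_eq_zero.mp (pow_eq_zero_iff (n := 2) (by norm_num) |>.mp h) with h | h
    · exact Or.inr (Or.inl (by linarith))
    · exact Or.inr (Or.inr (Or.inl h))

lemma tzA (α t : ℝ) (h : α = 0 ∨ t = -1 ∨ t = -1/2 ∨ t = 0 ∨ t = 1/2) (hne : t ≠ -1) :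
    α * (t ^ 3 - t / 4) = 0 := by
  rcases h with h | h | h | h | h
  · rw [h]; ring
  · exact absurd h hne
  all_goals rw [h]; norm_num

lemma tzB (α t : ℝ) (h : α = 0 ∨ t = -1 ∨ t = -1/2 ∨ t = 0 ∨ t = 1/2) (hne : t ≠ 1/2) :
    α * (t ^ 3 + 3 / 2 * t ^ 2 + 1 / 2 * t) = 0 := by
  rcases h with h | h | h | h | h
  · rw [h]; ring
  · rw [h]; norm_num
  · rw [h]; norm_num
  · rw [h]; norm_num
  · exact absurd h hne
lemma tzC (α t : ℝ) (h : α = 0 ∨ t = -1 ∨ t = -1/2 ∨ t = 0 ∨ t = 1/2)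
    (hne : t = -1/2 → α = 0) : α * (t ^ 3 + 1 / 2 * t ^ 2 - 1 / 2 * t) = 0 := by
  rcases h with h | h | h | h | h
  · rw [h]; ring
  · rw [h]; norm_num
  · rw [hne h, h]; norm_num
  · rw [h]; norm_num
  · rw [h]; norm_num
lemma tzD (α t : ℝ) (h : α = 0 ∨ t = -1 ∨ t = -1/2 ∨ t = 0 ∨ t = 1/2)
    (hne : t = 0 → α = 0) : α * (t ^ 3 + t ^ 2 - 1 / 4 * t - 1 / 4) = 0 := by
  rcases h with h | h | h | h | h
  · rw [h]; ring
  · rw [h]; norm_num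
  · rw [h]; norm_num
  · rw [hne h, h]; norm_num
  · rw [h]; norm_num

set_option maxHeartbeats 1000000 in
theorem moment_system_unique (t₁ t₂ t₃ t₄ α₁ α₂ α₃ α₄ : ℝ)
    (ht : -1 ≤ t₁ ∧ t₁ ≤ t₂ ∧ t₂ ≤ t₃ ∧ t₃ ≤ t₄ ∧ t₄ ≤ 1 / 2)
    (hα : 0 ≤ α₁ ∧ 0 ≤ α₂ ∧ 0 ≤ α₃ ∧ 0 ≤ α₄)
    (heq : ∀ k : ℕ, k ≤ 7 →
      α₁ * t₁ ^ k + α₂ * t₂ ^ k + α₃ * t₃ ^ k + α₄ * t₄ ^ k =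
        (![239, -1, 29, -1, 8, -1, 11 / 4, -1] : Fin 8 → ℝ) (Fin.ofNat 8 k)) :
    t₁ = -1 ∧ t₂ = -1 / 2 ∧ t₃ = 0 ∧ t₄ = 1 / 2 ∧
      α₁ = 1 ∧ α₂ = 56 ∧ α₃ = 126 ∧ α₄ = 56 := by
  obtain ⟨ht1, ht12, ht23, ht34, ht4⟩ := ht
  obtain ⟨ha1, ha2, ha3, ha4⟩ := hα
  have e0 : α₁ * t₁ ^ 0 + α₂ * t₂ ^ 0 + α₃ * t₃ ^ 0 + α₄ * t₄ ^ 0 = 239 := heq 0 (by norm_num)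
  have e1 : α₁ * t₁ ^ 1 + α₂ * t₂ ^ 1 + α₃ * t₃ ^ 1 + α₄ * t₄ ^ 1 = -1 := heq 1 (by norm_num)
  have e2 : α₁ * t₁ ^ 2 + α₂ * t₂ ^ 2 + α₃ * t₃ ^ 2 + α₄ * t₄ ^ 2 = 29 := heq 2 (by norm_num)
  have e3 : α₁ * t₁ ^ 3 + α₂ * t₂ ^ 3 + α₃ * t₃ ^ 3 + α₄ * t₄ ^ 3 = -1 := heq 3 (by norm_num)
  have e4 : α₁ * t₁ ^ 4 + α₂ * t₂ ^ 4 + α₃ * t₃ ^ 4 + α₄ * t₄ ^ 4 = 8 := heq 4 (by norm_num)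
  have e5 : α₁ * t₁ ^ 5 + α₂ * t₂ ^ 5 + α₃ * t₃ ^ 5 + α₄ * t₄ ^ 5 = -1 := heq 5 (by norm_num)
  have e6 : α₁ * t₁ ^ 6 + α₂ * t₂ ^ 6 + α₃ * t₃ ^ 6 + α₄ * t₄ ^ 6 = 11 / 4 := heq 6 (by norm_num)
  clear heq
  set f : ℝ → ℝ := fun t => (1 + t) * (1 / 2 - t) * ((t + 1 / 2) * t) ^ 2 with hf
  have hb : ∀ t, -1 ≤ t → t ≤ 1 / 2 → 0 ≤ f t := fun t h1 h2 =>
    mul_nonneg (mul_nonneg (by linarith) (by linarith)) (sq_nonneg _)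
  have hF1 : 0 ≤ α₁ * f t₁ := mul_nonneg ha1 (hb t₁ (by linarith) (by linarith))
  have hF2 : 0 ≤ α₂ * f t₂ := mul_nonneg ha2 (hb t₂ (by linarith) (by linarith))
  have hF3 : 0 ≤ α₃ * f t₃ := mul_nonneg ha3 (hb t₃ (by linarith) (by linarith))
  have hF4 : 0 ≤ α₄ * f t₄ := mul_nonneg ha4 (hb t₄ (by linarith) (by linarith))
  have hsum : α₁ * f t₁ + α₂ * f t₂ + α₃ * f t₃ + α₄ * f t₄ = 0 := by
    simp only [hf]
    linear_combination (1/8) * e2 + (3/8) * e3 - (1/4) * e4 - (3/2) * e5 - e6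
  have H1 : α₁ = 0 ∨ t₁ = -1 ∨ t₁ = -1/2 ∨ t₁ = 0 ∨ t₁ = 1/2 :=
    (mul_eq_zero.mp (by linarith : α₁ * f t₁ = 0)).imp id (root_cases _)
  have H2 : α₂ = 0 ∨ t₂ = -1 ∨ t₂ = -1/2 ∨ t₂ = 0 ∨ t₂ = 1/2 :=
    (mul_eq_zero.mp (by linarith : α₂ * f t₂ = 0)).imp id (root_cases _)
  have H3 : α₃ = 0 ∨ t₃ = -1 ∨ t₃ = -1/2 ∨ t₃ = 0 ∨ t₃ = 1/2 :=
    (mul_eq_zero.mp (by linarith : α₃ * f t₃ = 0)).imp id (root_cases _)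
  have H4 : α₄ = 0 ∨ t₄ = -1 ∨ t₄ = -1/2 ∨ t₄ = 0 ∨ t₄ = 1/2 :=
    (mul_eq_zero.mp (by linarith : α₄ * f t₄ = 0)).imp id (root_cases _)
  clear hsum hF1 hF2 hF3 hF4 hb hf
  clear_value f
  clear f
  -- t₁ = -1
  have hsA : α₁ * (t₁ ^ 3 - t₁ / 4) + α₂ * (t₂ ^ 3 - t₂ / 4) + α₃ * (t₃ ^ 3 - t₃ / 4)
      + α₄ * (t₄ ^ 3 - t₄ / 4) = -3/4 := by linear_combination e3 - (1/4) * e1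
  have hT1 : t₁ = -1 := by
    by_contra hne
    have hgt : -1 < t₁ := lt_of_le_of_ne ht1 (Ne.symm hne)
    have z1 := tzA α₁ t₁ H1 hne
    have z2 := tzA α₂ t₂ H2 (by intro h; rw [h] at ht12; linarith)
    have z3 := tzA α₃ t₃ H3 (by intro h; rw [h] at ht23; linarith)
    have z4 := tzA α₄ t₄ H4 (by intro h; rw [h] at ht34; linarith)
    linarith
  -- t₄ = 1/2
  have hsB : α₁ * (t₁ ^ 3 + 3 / 2 * t₁ ^ 2 + 1 / 2 * t₁)
      + α₂ * (t₂ ^ 3 + 3 / 2 * t₂ ^ 2 + 1 / 2 * t₂)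
      + α₃ * (t₃ ^ 3 + 3 / 2 * t₃ ^ 2 + 1 / 2 * t₃)
      + α₄ * (t₄ ^ 3 + 3 / 2 * t₄ ^ 2 + 1 / 2 * t₄) = 42 := by
    linear_combination e3 + (3/2) * e2 + (1/2) * e1
  have hT4 : t₄ = 1/2 := by
    by_contra hne
    have hlt : t₄ < 1/2 := lt_of_le_of_ne ht4 hne
    have z4 := tzB α₄ t₄ H4 hne
    have z3 := tzB α₃ t₃ H3 (by intro h; rw [h] at ht34; linarith)
    have z2 := tzB α₂ t₂ H2 (by intro h; rw [h] at ht23; linarith)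
    have z1 := tzB α₁ t₁ H1 (by intro h; rw [h] at ht12; linarith)
    linarith
  -- witness for -1/2
  have hsC : α₁ * (t₁ ^ 3 + 1 / 2 * t₁ ^ 2 - 1 / 2 * t₁)
      + α₂ * (t₂ ^ 3 + 1 / 2 * t₂ ^ 2 - 1 / 2 * t₂)
      + α₃ * (t₃ ^ 3 + 1 / 2 * t₃ ^ 2 - 1 / 2 * t₃)
      + α₄ * (t₄ ^ 3 + 1 / 2 * t₄ ^ 2 - 1 / 2 * t₄) = 14 := by
    linear_combination e3 + (1/2) * e2 - (1/2) * e1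
  have hW2 : t₂ = -1/2 ∨ t₃ = -1/2 := by
    by_contra hcon
    push_neg at hcon
    have z1 := tzC α₁ t₁ H1 (by intro h; rw [hT1] at h; norm_num at h)
    have z2 := tzC α₂ t₂ H2 (fun h => absurd h hcon.1)
    have z3 := tzC α₃ t₃ H3 (fun h => absurd h hcon.2)
    have z4 := tzC α₄ t₄ H4 (by intro h; rw [hT4] at h; norm_num at h)
    linarith
  -- witness for 0
  have hsD : α₁ * (t₁ ^ 3 + t₁ ^ 2 - 1 / 4 * t₁ - 1 / 4)
      + α₂ * (t₂ ^ 3 + t₂ ^ 2 - 1 / 4 * t₂ - 1 / 4)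
      + α₃ * (t₃ ^ 3 + t₃ ^ 2 - 1 / 4 * t₃ - 1 / 4)
      + α₄ * (t₄ ^ 3 + t₄ ^ 2 - 1 / 4 * t₄ - 1 / 4) = -63/2 := by
    linear_combination e3 + e2 - (1/4) * e1 - (1/4) * e0
  have hW3 : t₂ = 0 ∨ t₃ = 0 := by
    by_contra hcon
    push_neg at hcon
    have z1 := tzD α₁ t₁ H1 (by intro h; rw [hT1] at h; norm_num at h)
    have z2 := tzD α₂ t₂ H2 (fun h => absurd h hcon.1)
    have z3 := tzD α₃ t₃ H3 (fun h => absurd h hcon.2)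
    have z4 := tzD α₄ t₄ H4 (by intro h; rw [hT4] at h; norm_num at h)
    linarith
  have hT2 : t₂ = -1/2 ∧ t₃ = 0 := by
    rcases hW2 with h2 | h2 <;> rcases hW3 with h3 | h3
    · rw [h2] at h3; norm_num at h3
    · exact ⟨h2, h3⟩
    · rw [h2, h3] at ht23; norm_num at ht23
    · rw [h2] at h3; norm_num at h3
  obtain ⟨hT2, hT3⟩ := hT2
  subst hT1 hT2 hT3 hT4
  norm_num at e0 e1 e2 e3
  refine ⟨rfl, by norm_num, rfl, by norm_num, by linarith, by linarith, by linarith, by linarith⟩
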